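/- If f is a K-linear bijection of the space of 3×3 trace-zero matrices over K satisfying f(x∗y) = f(x)∗f(y) for all trace-zero x, y, then tr((f(x))²) = tr(x²) for every trace-zero x. (Every automorphism of the pseudo-octonion algebra preserves the norm q(x) = (1/6)tr(x²).) -/

import Mathlib

set_option maxHeartbeats 1000000

/-- The product of the pseudo-octonion algebra on `3 × 3` matrices:
`x ∗ y = μ·xy + (1−μ)·yx − (1/3)·tr(xy)·I₃`. -/
noncomputable def pstar (K : Type*) [Field K] (μ : K)
    (x y : Matrix (Fin 3) (Fin 3) K) : Matrix (Fin 3) (Fin 3) K :=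
  μ • (x * y) + (1 - μ) • (y * x) - ((x * y).trace / 3) • (1 : Matrix (Fin 3) (Fin 3) K)

/-- The space of `3 × 3` trace-zero matrices over `K`. -/
noncomputable def sl3 (K : Type*) [Field K] : Submodule K (Matrix (Fin 3) (Fin 3) K) :=
  LinearMap.ker (Matrix.traceLinearMap (Fin 3) K K)

section Aux

variable {K : Type*} [Field K] [CharZero K]

/-- The pseudo-octonion product always has trace zero. -/
lemma pstar_trace (μ : K) (x y : Matrix (Fin 3) (Fin 3) K) :
    (pstar K μ x y).trace = 0 := by
  simp [pstar, Matrix.trace_smul, Matrix.trace_one, Matrix.trace_mul_comm y x]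
  ring

/-- Cayley–Hamilton-type identity for `3 × 3` trace-zero matrices:
`a³ = (tr(a²)/2)·a + (tr(a³)/3)·I`. -/
lemma cube_identity (a : Matrix (Fin 3) (Fin 3) K) (ha : a.trace = 0) :
    a * a * a = (((a * a).trace) / 2) • a + (((a * a * a).trace) / 3) • 1 := by
  have ha' : a 0 0 + a 1 1 + a 2 2 = 0 := by
    simpa [Matrix.trace, Fin.sum_univ_three, Matrix.diag] using ha
  have h22 : a 2 2 = -(a 0 0 + a 1 1) := by linear_combination ha'
  ext i j
  fin_cases i <;> fin_cases j <;>
    simp [Matrix.mul_apply, Matrix.trace, Matrix.diag, Fin.sum_univ_three,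
      Matrix.one_apply, h22] <;>
    ring

/-- The key identity: for trace-zero `a`, `a ∗ (a ∗ a) = (tr(a²)/6) • a`. -/
lemma pstar_key (μ : K) (a : Matrix (Fin 3) (Fin 3) K) (ha : a.trace = 0) :
    pstar K μ a (pstar K μ a a) = (((a * a).trace) / 6) • a := by
  have h1 : pstar K μ a a = a * a - ((a * a).trace / 3) • 1 := by
    unfold pstar
    rw [← add_smul]
    ring_nf
    rw [one_smul]
  set c : K := (a * a).trace / 3 with hc
  set z : Matrix (Fin 3) (Fin 3) K := a * a - c • 1 with hz
  have haz : a * z = a * a * a - c • a := by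
    rw [hz]; rw [Matrix.mul_sub, Matrix.mul_smul, Matrix.mul_one, ← Matrix.mul_assoc]
  have hza : z * a = a * a * a - c • a := by
    rw [hz]; rw [Matrix.sub_mul, Matrix.smul_mul, Matrix.one_mul, Matrix.mul_assoc]
  have htr : (a * a * a - c • a).trace = (a * a * a).trace := by
    rw [Matrix.trace_sub, Matrix.trace_smul, ha]; simp
  rw [h1]
  unfold pstar
  rw [haz, hza, htr, ← add_smul]
  have hμ : μ + (1 - μ) = 1 := by ring
  rw [hμ, one_smul]
  rw [cube_identity a ha, hc]
  ext i j
  simp [Matrix.sub_apply, Matrix.add_apply, Matrix.smul_apply, Matrix.one_apply]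
  ring_nf
  by_cases h : i = j <;> simp [h, ha]

lemma mem_sl3 {a : Matrix (Fin 3) (Fin 3) K} (h : a.trace = 0) : a ∈ sl3 K := by
  simpa [sl3, LinearMap.mem_ker] using h

lemma sl3_trace (x : sl3 K) : (x : Matrix (Fin 3) (Fin 3) K).trace = 0 := x.2

end Aux

/-- Every (linear, bijective) automorphism of the pseudo-octonion algebra preserves the
norm `q(x) = (1/6)·tr(x²)`, i.e. preserves `tr(x²)`. -/
theorem pseudoOctonion_aut_preserves_norm
    (K : Type*) [Field K] [CharZero K] (ω : K) (hω1 : ω ≠ 1) (hω3 : ω ^ 3 = 1)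
    (f : sl3 K ≃ₗ[K] sl3 K)
    (hf : ∀ x y z : sl3 K,
      (z : Matrix (Fin 3) (Fin 3) K) = pstar K ((1 - ω) / 3) x y →
      (f z : Matrix (Fin 3) (Fin 3) K) = pstar K ((1 - ω) / 3) (f x) (f y)) :
    ∀ x : sl3 K,
      ((f x : Matrix (Fin 3) (Fin 3) K) * (f x : Matrix (Fin 3) (Fin 3) K)).trace
        = ((x : Matrix (Fin 3) (Fin 3) K) * (x : Matrix (Fin 3) (Fin 3) K)).trace := by
  intro x
  set μ : K := (1 - ω) / 3 with hμ
  set a : Matrix (Fin 3) (Fin 3) K := (x : Matrix (Fin 3) (Fin 3) K) with hax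
  set b : Matrix (Fin 3) (Fin 3) K := (f x : Matrix (Fin 3) (Fin 3) K) with hbx
  have hat : a.trace = 0 := sl3_trace x
  have hbt : b.trace = 0 := sl3_trace (f x)
  set t : K := (a * a).trace with ht
  set t' : K := (b * b).trace with ht'
  -- z := x ∗ x as an element of sl3
  set z : sl3 K := ⟨pstar K μ a a, mem_sl3 (pstar_trace μ a a)⟩ with hzdef
  have hz := hf x x z rfl
  -- w := x ∗ z as an element of sl3
  set w : sl3 K := ⟨pstar K μ a (z : Matrix (Fin 3) (Fin 3) K),
    mem_sl3 (pstar_trace μ a _)⟩ with hwdef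
  have hw := hf x z w rfl
  -- w = (t/6) • x
  have hw2 : w = (t / 6) • x := by
    apply Subtype.ext
    show pstar K μ a (pstar K μ a a) = _
    rw [pstar_key μ a hat]
    simp [hax]
    rfl
  -- coercion of f w equals (t'/6) • b
  have hfw : (f w : Matrix (Fin 3) (Fin 3) K) = (t' / 6) • b := by
    rw [hw, hz]
    exact pstar_key μ b hbt
  have hfw2 : (f w : Matrix (Fin 3) (Fin 3) K) = (t / 6) • b := by
    rw [hw2, map_smul]
    simp [hbx]
  have hkey : (t / 6) • b = (t' / 6) • b := by rw [← hfw2, hfw]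
  by_cases hb : b = 0
  · have hfx : f x = 0 := Subtype.ext (by rw [← hbx]; exact hb)
    have hx0 : x = 0 := by
      have h := f.symm_apply_apply x
      rw [hfx, map_zero] at h
      exact h.symm
    have ha0 : a = 0 := by rw [hax, hx0, ZeroMemClass.coe_zero]
    rw [ht, ht', hb, ha0, Matrix.zero_mul, Matrix.trace_zero]
  · have h6 : (t / 6 - t' / 6) • b = 0 := by
      rw [sub_smul, hkey, sub_self]
    rcases smul_eq_zero.mp h6 with h | h
    · have : t = t' := by field_simp at h; linear_combination h
      rw [ht', ht] at this; exact this.symm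
    · exact absurd h hb
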